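/- Let b ≥ 1, let V be a finite-dimensional real inner product space with orthogonal splitting V = V₁ ⊕ V₂, dim V₁ = b, and let A: Λ²V → Λ²V be self-adjoint such that V₁∧V₁, V₁∧V₂, V₂∧V₂ are eigenspaces with eigenvalues λ₁₁, λ₁₂, λ₂₂. Given ε > 0, set δ = ε/dim V. If λ₁₂ > 0, (b-1)λ₁₁ + λ₁₂ > 0, and |λ₂₂| < δ, then for every k ≥ b and every orthonormal set {u₀, u₁, ..., u_k} ⊂ V, ∑_{i=1}^k ⟨A(u₀∧uᵢ), u₀∧uᵢ⟩ > -ε. -/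

import Mathlib

open scoped RealInnerProductSpace

/-- Core real-arithmetic inequality. -/
private lemma rw_core (b : ℕ) (hb : 1 ≤ b) (S₁ S₂ α l₁₁ l₁₂ : ℝ)
    (h1 : 0 ≤ S₁) (h2 : S₁ ≤ ((b : ℝ) - 1) * α) (h3 : 0 ≤ S₂) (h4 : 2 ≤ b → α ≤ S₂)
    (hα : 0 ≤ α) (h12 : 0 < l₁₂) (hbl : 0 < ((b : ℝ) - 1) * l₁₁ + l₁₂) :
    0 ≤ l₁₁ * S₁ + l₁₂ * S₂ := by
  rcases le_or_gt 0 l₁₁ with h | h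
  · nlinarith [mul_nonneg h h1, mul_nonneg h12.le h3]
  · rcases eq_or_lt_of_le hb with hb1 | hb2
    · have hb1' : (b : ℝ) = 1 := by exact_mod_cast hb1.symm
      have hS10 : S₁ = 0 := by
        have : S₁ ≤ 0 := by rw [hb1'] at h2; simpa using h2
        linarith
      nlinarith [mul_nonneg h12.le h3]
    · have hb2' : (2 : ℝ) ≤ (b : ℝ) := by exact_mod_cast hb2
      have h4' := h4 hb2
      nlinarith [mul_nonneg (le_of_lt (neg_pos.mpr h)) (by linarith : (0:ℝ) ≤ ((b:ℝ) - 1) * α - S₁),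
        mul_nonneg h12.le (by linarith : (0:ℝ) ≤ S₂ - α),
        mul_nonneg hα hbl.le]

/-- Lower bound on the `l₁₂` sum. -/
private lemma rw_S2 {k : ℕ} (b : ℕ) (hbk : b ≤ k) (hb2 : 2 ≤ b) (α : ℝ) (a p : Fin k → ℝ)
    (hα0 : 0 ≤ α) (hα1 : α ≤ 1) (ha0 : ∀ i, 0 ≤ a i) (ha1 : ∀ i, a i ≤ 1)
    (hsa : α + ∑ i, a i ≤ (b : ℝ)) :
    α ≤ ∑ i, (α * (1 - a i) + (1 - α) * a i + 2 * p i ^ 2) := by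
  have hstep : ∀ i : Fin k, α + (1 - 2 * α) * a i ≤
      α * (1 - a i) + (1 - α) * a i + 2 * p i ^ 2 := by
    intro i; nlinarith [sq_nonneg (p i)]
  have hsum : ∑ i : Fin k, (α + (1 - 2 * α) * a i) ≤
      ∑ i, (α * (1 - a i) + (1 - α) * a i + 2 * p i ^ 2) :=
    Finset.sum_le_sum fun i _ => hstep i
  have hleft : ∑ i : Fin k, (α + (1 - 2 * α) * a i)
      = (k : ℝ) * α + (1 - 2 * α) * ∑ i, a i := by
    rw [Finset.sum_add_distrib, ← Finset.mul_sum, Finset.sum_const, Finset.card_univ]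
    simp [nsmul_eq_mul]
  set s := ∑ i, a i with hs
  have hs0 : 0 ≤ s := Finset.sum_nonneg fun i _ => ha0 i
  have hsb : s ≤ (b : ℝ) - α := by linarith
  have hkb : (b : ℝ) ≤ (k : ℝ) := by exact_mod_cast hbk
  have hb2' : (2 : ℝ) ≤ (b : ℝ) := by exact_mod_cast hb2
  refine le_trans ?_ hsum
  rw [hleft]
  rcases le_or_gt α (1 / 2) with hhalf | hhalf
  · nlinarith [mul_nonneg (by linarith : (0:ℝ) ≤ 1 - 2 * α) hs0,
      mul_nonneg (by linarith : (0:ℝ) ≤ (k : ℝ) - 1) hα0]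
  · nlinarith [mul_nonneg (by linarith : (0:ℝ) ≤ 2 * α - 1) (by linarith : (0:ℝ) ≤ (b : ℝ) - α - s),
      mul_nonneg (by linarith : (0:ℝ) ≤ (k : ℝ) - (b : ℝ)) hα0,
      mul_nonneg (by linarith : (0:ℝ) ≤ (b : ℝ) - 2 * α) (by linarith : (0:ℝ) ≤ 1 - α)]

set_option maxHeartbeats 1600000 in
/-- Lemma 6.2 (reiser_wraith_contextual): with V = V₁ ⊕ V₂, dim V₁ = b, eigenvalues
λ₁₁, λ₁₂, λ₂₂ of A on V₁∧V₁, V₁∧V₂, V₂∧V₂ satisfying λ₁₂ > 0, (b-1)λ₁₁ + λ₁₂ > 0,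
and |λ₂₂| < δ = ε/dim V, every partial trace over an orthonormal (k+1)-frame with
k ≥ b exceeds -ε. -/
theorem stmt_18
    {V W : Type*} [NormedAddCommGroup V] [InnerProductSpace ℝ V] [FiniteDimensional ℝ V]
    [NormedAddCommGroup W] [InnerProductSpace ℝ W]
    (wedge : V →ₗ[ℝ] V →ₗ[ℝ] W)
    (hspan : Submodule.span ℝ {w : W | ∃ x y, wedge x y = w} = ⊤)
    (hinner : ∀ x y z u : V,
      ⟪wedge x y, wedge z u⟫ = ⟪x, z⟫ * ⟪y, u⟫ - ⟪x, u⟫ * ⟪y, z⟫)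
    (V₁ V₂ : Submodule ℝ V) (b : ℕ) (hb : 1 ≤ b) (hdim : Module.finrank ℝ V₁ = b)
    (horth : ∀ x ∈ V₁, ∀ y ∈ V₂, ⟪x, y⟫ = 0)
    (hsum : V₁ ⊔ V₂ = ⊤)
    (A : W →ₗ[ℝ] W) (hA : ∀ x y : W, ⟪A x, y⟫ = ⟪x, A y⟫)
    (l₁₁ l₁₂ l₂₂ ε : ℝ) (hε : 0 < ε)
    (he₁₁ : ∀ x ∈ V₁, ∀ y ∈ V₁, A (wedge x y) = l₁₁ • wedge x y)
    (he₁₂ : ∀ x ∈ V₁, ∀ y ∈ V₂, A (wedge x y) = l₁₂ • wedge x y)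
    (he₂₂ : ∀ x ∈ V₂, ∀ y ∈ V₂, A (wedge x y) = l₂₂ • wedge x y)
    (h12 : 0 < l₁₂) (hbl : 0 < (b - 1 : ℝ) * l₁₁ + l₁₂)
    (h22 : |l₂₂| < ε / (Module.finrank ℝ V)) :
    ∀ k : ℕ, b ≤ k → ∀ u : Fin (k + 1) → V, Orthonormal ℝ u →
      -ε < ∑ i : Fin k, ⟪A (wedge (u 0) (u i.succ)), wedge (u 0) (u i.succ)⟫ := by
  intro k hk u hu
  classical
  -- wedges are antisymmetric
  have hzero : ∀ w : W, (∀ z v : V, ⟪w, wedge z v⟫ = 0) → w = 0 := by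
    intro w hw
    have h : ∀ v ∈ Submodule.span ℝ {w : W | ∃ x y, wedge x y = w}, ⟪w, v⟫ = 0 := by
      intro v hv
      induction hv using Submodule.span_induction with
      | mem x hx => obtain ⟨a, c, rfl⟩ := hx; exact hw a c
      | zero => exact inner_zero_right w
      | add x y _ _ hx hy => rw [inner_add_right, hx, hy, add_zero]
      | smul r x _ hx => rw [real_inner_smul_right, hx, mul_zero]
    have := h w (by rw [hspan]; trivial)
    exact inner_self_eq_zero.mp this
  have hanti : ∀ z v : V, wedge v z = - wedge z v := by
    intro z v
    have h0 : wedge v z + wedge z v = 0 := by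
      apply hzero
      intro a c
      rw [inner_add_left, hinner, hinner]
      ring
    exact eq_neg_of_add_eq_zero_left h0
  -- V₂ is the orthogonal complement of V₁
  have hV21 : V₂ ≤ V₁ᗮ := fun v hv => (Submodule.mem_orthogonal V₁ v).mpr
    fun z hz => horth z hz v hv
  have hV12 : V₁ᗮ ≤ V₂ := by
    intro v hv
    have hvT : v ∈ V₁ ⊔ V₂ := by rw [hsum]; trivial
    obtain ⟨a, ha, c, hc, rfl⟩ := Submodule.mem_sup.mp hvT
    have haV : a ∈ V₁ᗮ := by
      have : a = (a + c) - c := by abel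
      rw [this]
      exact Submodule.sub_mem _ hv (hV21 hc)
    have ha0 : a = 0 := by
      have hmem : a ∈ V₁ ⊓ V₁ᗮ := ⟨ha, haV⟩
      rwa [Submodule.inf_orthogonal_eq_bot, Submodule.mem_bot] at hmem
    rw [ha0, zero_add]
    exact hc
  -- projections
  set xp : Fin (k + 1) → V₁ := fun i => V₁.orthogonalProjectionOnto (u i) with hxp
  set x : Fin (k + 1) → V := fun i => (xp i : V) with hxdef
  set y : Fin (k + 1) → V := fun i => u i - x i with hydef
  have hx : ∀ i, x i ∈ V₁ := fun i => SetLike.coe_mem (xp i)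
  have hy' : ∀ i, y i ∈ V₁ᗮ := fun i => Submodule.sub_starProjection_mem_orthogonal (K := V₁) (u i)
  have hy : ∀ i, y i ∈ V₂ := fun i => hV12 (hy' i)
  have huxy : ∀ i, u i = x i + y i := fun i => by simp [hydef]
  have hxy : ∀ i j, ⟪x i, y j⟫ = 0 := fun i j => horth _ (hx i) _ (hy j)
  have hyx : ∀ i j, ⟪y i, x j⟫ = 0 := fun i j => by
    rw [real_inner_comm]; exact hxy j i
  -- inner products of the frame
  have hinneru : ∀ i j, ⟪u i, u j⟫ = ⟪x i, x j⟫ + ⟪y i, y j⟫ := by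
    intro i j
    rw [huxy i, huxy j, inner_add_left, inner_add_right, inner_add_right, hxy, hyx]
    ring
  have huij : ∀ i j : Fin (k + 1), ⟪u i, u j⟫ = if i = j then 1 else 0 :=
    fun i j => orthonormal_iff_ite.mp hu i j
  -- abbreviations
  set α : ℝ := ⟪x 0, x 0⟫ with hαdef
  set a : Fin k → ℝ := fun i => ⟪x i.succ, x i.succ⟫ with hadef
  set p : Fin k → ℝ := fun i => ⟪x 0, x i.succ⟫ with hpdef
  have hbeta : ⟪y 0, y 0⟫ = 1 - α := by
    have := hinneru 0 0
    rw [huij 0 0] at this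
    simp at this
    rw [hαdef, real_inner_self_eq_norm_sq, real_inner_self_eq_norm_sq]
    linarith
  have hbbi : ∀ i : Fin k, ⟪y i.succ, y i.succ⟫ = 1 - a i := by
    intro i
    have := hinneru i.succ i.succ
    rw [huij i.succ i.succ] at this
    simp at this
    simp [hadef]
    linarith
  have hqi : ∀ i : Fin k, ⟪y 0, y i.succ⟫ = -p i := by
    intro i
    have := hinneru 0 i.succ
    rw [huij 0 i.succ, if_neg (Fin.succ_ne_zero i).symm] at this
    simp [hpdef]
    linarith
  -- basic bounds
  have hα0 : 0 ≤ α := real_inner_self_nonneg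
  have hα1 : α ≤ 1 := by
    have := real_inner_self_nonneg (x := y 0)
    rw [hbeta] at this; linarith
  have ha0 : ∀ i, 0 ≤ a i := fun i => real_inner_self_nonneg
  have ha1 : ∀ i, a i ≤ 1 := by
    intro i
    have := real_inner_self_nonneg (x := y i.succ)
    rw [hbbi i] at this; linarith
  have hcs : ∀ i, p i ^ 2 ≤ α * a i := by
    intro i
    have := real_inner_mul_inner_self_le (x 0) (x i.succ)
    simpa [hpdef, hαdef, hadef, sq] using this
  -- per-term formula
  have hterm : ∀ i : Fin k, ⟪A (wedge (u 0) (u i.succ)), wedge (u 0) (u i.succ)⟫ =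
      l₁₁ * (α * a i - p i ^ 2) + l₁₂ * (α * (1 - a i) + (1 - α) * a i + 2 * p i ^ 2)
        + l₂₂ * ((1 - α) * (1 - a i) - p i ^ 2) := by
    intro i
    have hw : wedge (u 0) (u i.succ) = wedge (x 0) (x i.succ) + wedge (x 0) (y i.succ)
        + wedge (y 0) (x i.succ) + wedge (y 0) (y i.succ) := by
      rw [huxy 0, huxy i.succ]
      simp only [map_add, LinearMap.add_apply]
      abel
    have hyxA : A (wedge (y 0) (x i.succ)) = l₁₂ • wedge (y 0) (x i.succ) := by
      rw [hanti (x i.succ) (y 0)]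
      rw [map_neg, he₁₂ _ (hx i.succ) _ (hy 0), smul_neg]
    have hAw : A (wedge (u 0) (u i.succ)) = l₁₁ • wedge (x 0) (x i.succ)
        + l₁₂ • wedge (x 0) (y i.succ) + l₁₂ • wedge (y 0) (x i.succ)
        + l₂₂ • wedge (y 0) (y i.succ) := by
      rw [hw, map_add, map_add, map_add, he₁₁ _ (hx 0) _ (hx i.succ),
        he₁₂ _ (hx 0) _ (hy i.succ), hyxA, he₂₂ _ (hy 0) _ (hy i.succ)]
    have hp' : ⟪x 0, x i.succ⟫ = p i := by simp [hpdef]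
    have hps : ⟪x i.succ, x 0⟫ = p i := (real_inner_comm _ _).trans hp'
    have hqs : ⟪y i.succ, y 0⟫ = -p i := (real_inner_comm _ _).trans (hqi i)
    have ha' : ⟪x i.succ, x i.succ⟫ = a i := by simp [hadef]
    have hα' : ⟪x 0, x 0⟫ = α := by simp [hαdef]
    rw [hAw, hw]
    simp only [inner_add_left, inner_add_right, real_inner_smul_left, hinner, hxy, hyx,
      hbeta, hbbi i, hqi i, hp', hps, hqs, ha', hα']
    ring
  -- helper: expansion of projections in an orthonormal basis of V₁
  haveI : NeZero b := ⟨by omega⟩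
  have hxcoe : ∀ i, ((xp i : V₁) : V) = x i := fun i => by simp [hxdef]
  have hcoef : ∀ (g : OrthonormalBasis (Fin b) ℝ V₁) (j : Fin b) (i : Fin (k + 1)),
      ⟪((g j : V₁) : V), x i⟫ = ⟪((g j : V₁) : V), u i⟫ := by
    intro g j i
    have h0 : ⟪((g j : V₁) : V), y i⟫ = 0 :=
      (Submodule.mem_orthogonal V₁ (y i)).mp (hy' i) _ (SetLike.coe_mem (g j))
    rw [huxy i, inner_add_right, h0, add_zero]
  have hexp : ∀ (g : OrthonormalBasis (Fin b) ℝ V₁) (i : Fin (k + 1)),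
      ⟪x i, x i⟫ = ∑ j : Fin b, ⟪((g j : V₁) : V), u i⟫ ^ 2 := by
    intro g i
    have h1 : ⟪x i, x i⟫ = ⟪xp i, xp i⟫ := by
      simp only [← hxcoe]
      exact (Submodule.coe_inner V₁ (xp i) (xp i)).symm
    rw [h1, ← g.sum_inner_mul_inner (xp i) (xp i)]
    refine Finset.sum_congr rfl fun j _ => ?_
    simp only [Submodule.coe_inner, hxcoe]
    have hc : ⟪x i, ((g j : V₁) : V)⟫ = ⟪((g j : V₁) : V), u i⟫ :=
      (real_inner_comm _ _).trans (hcoef g j i)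
    have hc' : ⟪((g j : V₁) : V), x i⟫ = ⟪((g j : V₁) : V), u i⟫ := hcoef g j i
    rw [hc, hc', sq]
  have hnorm1 : ∀ (g : OrthonormalBasis (Fin b) ℝ V₁) (j : Fin b), ‖((g j : V₁) : V)‖ = 1 := by
    intro g j
    rw [show ‖((g j : V₁) : V)‖ = ‖(g j : V₁)‖ from rfl]
    exact g.orthonormal.1 j
  -- Bessel for orthonormal families
  have hbessel : ∀ {m : ℕ} (v : Fin m → V), Orthonormal ℝ v → ∀ w : V,
      ∑ i : Fin m, ⟪w, v i⟫ ^ 2 ≤ ‖w‖ ^ 2 := by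
    intro m v hv w
    have := hv.sum_inner_products_le (s := Finset.univ) w
    calc ∑ i : Fin m, ⟪w, v i⟫ ^ 2 = ∑ i : Fin m, ‖⟪v i, w⟫‖ ^ 2 := by
          refine Finset.sum_congr rfl fun i _ => ?_
          rw [real_inner_comm, Real.norm_eq_abs, sq_abs]
      _ ≤ ‖w‖ ^ 2 := this
  have husucc : Orthonormal ℝ (fun i : Fin k => u i.succ) :=
    hu.comp Fin.succ (Fin.succ_injective k)
  -- trace bound: α + ∑ a ≤ b
  have hsa : α + ∑ i, a i ≤ (b : ℝ) := by
    have hfb : Module.finrank ℝ V₁ = Fintype.card (Fin b) := by simp [hdim]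
    set g : OrthonormalBasis (Fin b) ℝ V₁ :=
      (stdOrthonormalBasis ℝ V₁).reindex (finCongr hdim) with hg
    have hsum' : α + ∑ i, a i = ∑ i : Fin (k + 1), ⟪x i, x i⟫ := by
      rw [Fin.sum_univ_succ]
    rw [hsum']
    calc ∑ i : Fin (k + 1), ⟪x i, x i⟫
        = ∑ i : Fin (k + 1), ∑ j : Fin b, ⟪((g j : V₁) : V), u i⟫ ^ 2 :=
          Finset.sum_congr rfl fun i _ => hexp g i
      _ = ∑ j : Fin b, ∑ i : Fin (k + 1), ⟪((g j : V₁) : V), u i⟫ ^ 2 := Finset.sum_comm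
      _ ≤ ∑ j : Fin b, (1 : ℝ) := Finset.sum_le_sum fun j _ => by
          have := hbessel u hu ((g j : V₁) : V)
          rwa [hnorm1 g j, one_pow] at this
      _ = (b : ℝ) := by simp
  -- the key bound S₁ ≤ (b-1)α
  have hS1 : ∑ i : Fin k, (α * a i - p i ^ 2) ≤ ((b : ℝ) - 1) * α := by
    by_cases hx0 : x 0 = 0
    · have hα' : α = 0 := by rw [hαdef, hx0, inner_zero_left]
      have hp' : ∀ i, p i = 0 := fun i => by rw [hpdef]; simp [hx0]
      have : ∀ i : Fin k, α * a i - p i ^ 2 = 0 := fun i => by rw [hα', hp' i]; ring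
      rw [Finset.sum_congr rfl fun i _ => this i]
      simp [hα']
    · -- build an orthonormal basis of V₁ whose first vector is x 0 / ‖x 0‖
      have hxp0 : xp 0 ≠ 0 := by
        intro h0
        apply hx0
        rw [hxdef]; simp [h0]
      have hnx0 : ‖x 0‖ ≠ 0 := by
        simp only [hxdef, ne_eq, norm_eq_zero]
        exact_mod_cast fun h => hxp0 (by exact_mod_cast h)
      have hfb : Module.finrank ℝ V₁ = Fintype.card (Fin b) := by simp [hdim]
      have hvon : Orthonormal ℝ (Set.restrict {(0 : Fin b)}
          (fun _ : Fin b => (‖x 0‖⁻¹ • xp 0 : V₁))) := by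
        constructor
        · intro i
          show ‖(‖x 0‖⁻¹ • xp 0 : V₁)‖ = 1
          rw [norm_smul, norm_inv, Real.norm_eq_abs, abs_norm]
          have : ‖xp 0‖ = ‖x 0‖ := (Submodule.coe_norm (xp 0)).symm
          rw [this, inv_mul_cancel₀ hnx0]
        · intro i j hij
          exact absurd (Subsingleton.elim i j) hij
      obtain ⟨g, hg0⟩ := hvon.exists_orthonormalBasis_extension_of_card_eq hfb
      have hg0' : ((g 0 : V₁) : V) = ‖x 0‖⁻¹ • x 0 := by
        rw [hg0 0 rfl]
        simp [hxdef]
      have hpformula : ∀ i : Fin k, p i = ‖x 0‖ * ⟪((g 0 : V₁) : V), u i.succ⟫ := by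
        intro i
        rw [← hcoef g 0 i.succ, hg0', real_inner_smul_left, hpdef]
        field_simp
      have hαx : α = ‖x 0‖ ^ 2 := by rw [hαdef, real_inner_self_eq_norm_sq]
      have hterm2 : ∀ i : Fin k, α * a i - p i ^ 2
          = α * ∑ j ∈ Finset.univ.erase 0, ⟪((g j : V₁) : V), u i.succ⟫ ^ 2 := by
        intro i
        rw [show a i = ⟪x i.succ, x i.succ⟫ from rfl, hexp g i.succ, hpformula i,
          Finset.mul_sum, ← Finset.add_sum_erase _ _ (Finset.mem_univ (0 : Fin b)),
          Finset.mul_sum]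
        rw [hαx]; ring
      rw [Finset.sum_congr rfl fun i _ => hterm2 i, ← Finset.mul_sum]
      rw [Finset.sum_comm]
      have hbound : ∑ j ∈ Finset.univ.erase (0 : Fin b),
          ∑ i : Fin k, ⟪((g j : V₁) : V), u i.succ⟫ ^ 2 ≤ ((b : ℝ) - 1) := by
        calc ∑ j ∈ Finset.univ.erase (0 : Fin b), ∑ i : Fin k, ⟪((g j : V₁) : V), u i.succ⟫ ^ 2
            ≤ ∑ j ∈ Finset.univ.erase (0 : Fin b), (1 : ℝ) :=
              Finset.sum_le_sum fun j _ => by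
                have := hbessel (fun i : Fin k => u i.succ) husucc ((g j : V₁) : V)
                rwa [hnorm1 g j, one_pow] at this
          _ = ((b : ℝ) - 1) := by
              rw [Finset.sum_const, Finset.card_erase_of_mem (Finset.mem_univ _),
                Finset.card_univ]
              simp [Fintype.card_fin]
              rw [Nat.cast_sub hb]
              simp
        
      calc α * ∑ j ∈ Finset.univ.erase (0 : Fin b),
            ∑ i : Fin k, ⟪((g j : V₁) : V), u i.succ⟫ ^ 2
          ≤ α * ((b : ℝ) - 1) := by
            apply mul_le_mul_of_nonneg_left hbound hα0
        _ = ((b : ℝ) - 1) * α := by ring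
  -- cardinality: k + 1 ≤ dim V
  have hkn : (k + 1 : ℕ) ≤ Module.finrank ℝ V := by
    have := hu.linearIndependent.fintype_card_le_finrank
    simpa using this
  have hn0 : 0 < Module.finrank ℝ V := lt_of_lt_of_le (Nat.succ_pos k) hkn
  set n : ℝ := (Module.finrank ℝ V : ℝ) with hndef
  have hn0' : (0 : ℝ) < n := by simp only [hndef]; exact_mod_cast hn0
  have hkn' : (k : ℝ) ≤ n := by
    rw [hndef]; exact_mod_cast Nat.le_of_succ_le hkn
  have habsn : |l₂₂| * n < ε := by
    calc |l₂₂| * n < (ε / n) * n := by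
          apply mul_lt_mul_of_pos_right h22 hn0'
      _ = ε := by field_simp
  -- assemble
  rw [Finset.sum_congr rfl fun i _ => hterm i]
  rw [Finset.sum_add_distrib, Finset.sum_add_distrib, ← Finset.mul_sum, ← Finset.mul_sum,
    ← Finset.mul_sum]
  set S₁ := ∑ i : Fin k, (α * a i - p i ^ 2) with hS₁def
  set S₂ := ∑ i : Fin k, (α * (1 - a i) + (1 - α) * a i + 2 * p i ^ 2) with hS₂def
  set S₃ := ∑ i : Fin k, ((1 - α) * (1 - a i) - p i ^ 2) with hS₃def
  have hS₁0 : 0 ≤ S₁ := Finset.sum_nonneg fun i _ => by nlinarith [hcs i]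
  have hS₂0 : 0 ≤ S₂ := Finset.sum_nonneg fun i _ => by
    nlinarith [sq_nonneg (p i), ha0 i, ha1 i, hα0, hα1]
  have hS₂α : 2 ≤ b → α ≤ S₂ := fun hb2 => rw_S2 b hk hb2 α a p hα0 hα1 ha0 ha1 hsa
  have hmain : 0 ≤ l₁₁ * S₁ + l₁₂ * S₂ :=
    rw_core b hb S₁ S₂ α l₁₁ l₁₂ hS₁0 hS1 hS₂0 hS₂α hα0 h12 hbl
  -- CS for the y-part: p i ^ 2 ≤ (1 - α) * (1 - a i)
  have hcsy : ∀ i : Fin k, p i ^ 2 ≤ (1 - α) * (1 - a i) := by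
    intro i
    have := real_inner_mul_inner_self_le (y 0) (y i.succ)
    rw [hbeta, hbbi i, hqi i] at this
    nlinarith [this]
  have hS₃0 : 0 ≤ S₃ := Finset.sum_nonneg fun i _ => by nlinarith [hcsy i]
  have hS₃k : S₃ ≤ (k : ℝ) := by
    have : ∀ i : Fin k, (1 - α) * (1 - a i) - p i ^ 2 ≤ 1 := by
      intro i
      nlinarith [sq_nonneg (p i), ha0 i, ha1 i, hα0, hα1]
    calc S₃ ≤ ∑ i : Fin k, (1 : ℝ) := Finset.sum_le_sum fun i _ => this i
      _ = (k : ℝ) := by simp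
  have htail : -ε < l₂₂ * S₃ := by
    nlinarith [mul_nonneg (by linarith [neg_abs_le l₂₂] : (0:ℝ) ≤ l₂₂ + |l₂₂|) hS₃0,
      mul_le_mul_of_nonneg_left hS₃k (abs_nonneg l₂₂),
      mul_le_mul_of_nonneg_left hkn' (abs_nonneg l₂₂), habsn]
  linarith
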